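/- For any subset I ⊆ {1,...,n}, the permutation τ_I whose one-line notation is j_1, ..., j_k, i_l, ..., i_1 (the complement in increasing order followed by I in decreasing order) has sign ∏_{i ∈ I} (-1)^{n-i}. -/

import Mathlib

/-- The one-line word of `τ_I`: the elements of the complement of `I` in increasing order
followed by the elements of `I` in decreasing order.  Here `{1,…,n}` is modelled by
`Fin n` (zero-indexed), so `(-1)^(n-i)` becomes `(-1)^(n-1-(i : ℕ))`. -/
def tauWord {n : ℕ} (I : Finset (Fin n)) : List (Fin n) :=
  (Iᶜ.sort (· ≤ ·)) ++ (I.sort (· ≤ ·)).reverse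

namespace TauAux

lemma length_tauWord {n : ℕ} (I : Finset (Fin n)) : (tauWord I).length = n := by
  have := Finset.card_compl_add_card I
  simp only [tauWord, List.length_append, Finset.length_sort, List.length_reverse]
  simpa using this

lemma nodup_tauWord {n : ℕ} (I : Finset (Fin n)) : (tauWord I).Nodup := by
  refine List.Nodup.append (Finset.sort_nodup _ _)
    (List.nodup_reverse.mpr (Finset.sort_nodup _ _)) ?_
  intro x hx hx'
  rw [Finset.mem_sort] at hx
  rw [List.mem_reverse, Finset.mem_sort] at hx'
  exact (Finset.mem_compl.mp hx) hx'

/-- The permutation defined by the word `tauWord I`. -/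
noncomputable def fperm {n : ℕ} (I : Finset (Fin n)) : Equiv.Perm (Fin n) :=
  Equiv.ofBijective (fun p => (tauWord I).get (Fin.cast (length_tauWord I).symm p))
    (Finite.injective_iff_bijective.mp
      ((List.nodup_iff_injective_get.mp (nodup_tauWord I)).comp
        (fun p q h => by
          apply Fin.ext
          have := congrArg Fin.val h
          simpa using this)))

lemma fperm_apply {n : ℕ} (I : Finset (Fin n)) (p : Fin n)
    (hp : (p : ℕ) < (tauWord I).length) :
    fperm I p = (tauWord I)[(p : ℕ)] := rfl

/-- Indices are at most values in a strictly sorted list of `Fin n`. -/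
lemma le_getElem_of_sorted {n : ℕ} {cs : List (Fin n)} (hc : cs.Pairwise (· < ·)) :
    ∀ (q : ℕ) (hq : q < cs.length), q ≤ ((cs[q]'hq : Fin n) : ℕ) := by
  intro q
  induction q with
  | zero => intro _; exact Nat.zero_le _
  | succ q ih =>
    intro hq
    have h1 : q < cs.length := Nat.lt_of_succ_lt hq
    have h2 : cs.get ⟨q, h1⟩ < cs.get ⟨q + 1, hq⟩ :=
      hc.rel_get_of_lt (show (⟨q, h1⟩ : Fin _) < ⟨q + 1, hq⟩ from Nat.lt_succ_self q)
    have h3 := ih h1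
    simp only [List.get_eq_getElem] at h2
    have h4 : ((cs[q]'h1 : Fin n) : ℕ) < ((cs[q + 1]'hq : Fin n) : ℕ) := h2
    omega

/-- If all values `< m` belong to `S`, then the `p`-th element of the sorted list of `S`
is `p` itself, for `p < m`. -/
lemma getElem_sort_of_lt {n : ℕ} (S : Finset (Fin n)) (m : ℕ)
    (hS : ∀ x : Fin n, (x : ℕ) < m → x ∈ S) :
    ∀ (p : ℕ), p < m → ∀ (hp' : p < (S.sort (· ≤ ·)).length),
      (((S.sort (· ≤ ·))[p]) : ℕ) = p := by
  intro p
  induction p using Nat.strong_induction_on with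
  | _ p ih =>
    intro hp hp'
    have hpn : p < n := by
      have h1 : (S.sort (· ≤ ·)).length ≤ n := by
        rw [Finset.length_sort]
        simpa using Finset.card_le_univ S
      omega
    have hmem : (⟨p, hpn⟩ : Fin n) ∈ S.sort (· ≤ ·) := by
      rw [Finset.mem_sort]
      exact hS _ hp
    obtain ⟨q, hq, hval⟩ := List.mem_iff_getElem.mp hmem
    have hqp : p ≤ q := by
      by_contra hlt
      push_neg at hlt
      have h5 := ih q hlt (lt_trans hlt hp) hq
      rw [hval] at h5
      simp only [Fin.val_mk] at h5
      omega
    have hle : ((S.sort (· ≤ ·))[p] : ℕ) ≤ p := by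
      rcases eq_or_lt_of_le hqp with h | h
      · subst h; rw [hval]
      · have hmono : (S.sort (· ≤ ·)).get ⟨p, hp'⟩ < (S.sort (· ≤ ·)).get ⟨q, hq⟩ :=
          (Finset.sortedLT_sort S).strictMono_get (show (⟨p, hp'⟩ : Fin _) < ⟨q, hq⟩ from h)
        simp only [List.get_eq_getElem] at hmono
        rw [hval] at hmono
        exact le_of_lt hmono
    have hge := le_getElem_of_sorted (Finset.sortedLT_sort S).pairwise p hp'
    omega

lemma le_card_of_lt_mem {n : ℕ} (S : Finset (Fin n)) (m : Fin n)
    (hS : ∀ x : Fin n, (x : ℕ) < (m : ℕ) → x ∈ S) : (m : ℕ) ≤ S.card := by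
  have h := Fintype.card_le_of_injective
    (fun i : Fin (m : ℕ) => (⟨Fin.castLE m.isLt.le i,
        hS _ (by simpa using i.isLt)⟩ : {x // x ∈ S}))
    (by
      intro a b hab
      have h1 : (Fin.castLE m.isLt.le a : Fin n) = Fin.castLE m.isLt.le b :=
        Subtype.ext_iff.mp hab
      apply Fin.ext
      have := congrArg Fin.val h1
      simpa using this)
  simpa [Fintype.card_coe] using h

lemma sort_eq_min_cons {n : ℕ} (I : Finset (Fin n)) (hI : I.Nonempty) :
    I.sort (· ≤ ·) = I.min' hI :: (I.erase (I.min' hI)).sort (· ≤ ·) := by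
  refine flip (List.Perm.eq_of_pairwise' (Finset.pairwise_sort _ _)) ?_ ?_
  · apply Multiset.coe_eq_coe.mp
    rw [Finset.sort_eq, ← Multiset.cons_coe, Finset.sort_eq, Finset.erase_val]
    exact (Multiset.cons_erase (Finset.mem_def.mp (I.min'_mem hI))).symm
  · rw [List.pairwise_cons]
    refine ⟨?_, Finset.pairwise_sort _ _⟩
    intro b hb
    rw [Finset.mem_sort] at hb
    exact Finset.min'_le _ _ (Finset.mem_of_mem_erase hb)

lemma sort_insert_split {n : ℕ} (S : Finset (Fin n)) (m : Fin n) (hm : m ∉ S)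
    (hlt : ∀ x : Fin n, (x : ℕ) < (m : ℕ) → x ∈ S) :
    (insert m S).sort (· ≤ ·) =
      (S.sort (· ≤ ·)).take (m : ℕ) ++ m :: (S.sort (· ≤ ·)).drop (m : ℕ) := by
  refine flip (List.Perm.eq_of_pairwise' (Finset.pairwise_sort _ _)) ?_ ?_
  · have h1 : List.Perm ((insert m S).sort (· ≤ ·)) (m :: S.sort (· ≤ ·)) := by
      apply Multiset.coe_eq_coe.mp
      rw [Finset.sort_eq, ← Multiset.cons_coe, Finset.sort_eq]
      exact Finset.insert_val_of_notMem hm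
    refine h1.trans ?_
    have h2 := List.perm_middle (a := m) (l₁ := (S.sort (· ≤ ·)).take (m : ℕ))
      (l₂ := (S.sort (· ≤ ·)).drop (m : ℕ))
    rw [List.take_append_drop] at h2
    exact h2.symm
  · have hsort := Finset.pairwise_sort (α := Fin n) S (· ≤ ·)
    have hdrop : ∀ y ∈ (S.sort (· ≤ ·)).drop (m : ℕ), m ≤ y := by
      intro y hy
      obtain ⟨j, hj, hval⟩ := List.mem_iff_getElem.mp hy
      rw [List.getElem_drop] at hval
      have hlen : (m : ℕ) + j < (S.sort (· ≤ ·)).length := by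
        rw [List.length_drop] at hj; omega
      have := le_getElem_of_sorted (Finset.sortedLT_sort S).pairwise ((m : ℕ) + j) hlen
      rw [hval] at this
      exact Fin.le_def.mpr (by omega)
    have htake : ∀ x ∈ (S.sort (· ≤ ·)).take (m : ℕ), (x : ℕ) < (m : ℕ) := by
      intro x hx
      obtain ⟨j, hj, hval⟩ := List.mem_iff_getElem.mp hx
      rw [List.getElem_take] at hval
      have hjm : j < (m : ℕ) := by
        rw [List.length_take] at hj; omega
      have hjlen : j < (S.sort (· ≤ ·)).length := by
        rw [List.length_take] at hj; omega
      have := getElem_sort_of_lt S (m : ℕ) hlt j hjm hjlen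
      rw [hval] at this
      omega
    show List.Pairwise _ _
    rw [List.pairwise_append]
    refine ⟨?_, ?_, ?_⟩
    · exact List.Pairwise.sublist (List.take_sublist _ _) hsort
    · rw [List.pairwise_cons]
      exact ⟨hdrop, List.Pairwise.sublist (List.drop_sublist _ _) hsort⟩
    · intro x hx y hy
      have hxm := htake x hx
      rcases List.mem_cons.mp hy with rfl | hy'
      · exact Fin.le_def.mpr (le_of_lt hxm)
      · have := hdrop y hy'
        have hmy : (m : ℕ) ≤ (y : ℕ) := this
        exact Fin.le_def.mpr (by omega)

lemma sign_fperm : ∀ (N n : ℕ) (I : Finset (Fin n)), I.card = N →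
    Equiv.Perm.sign (fperm I) = ∏ i ∈ I, (-1 : ℤˣ) ^ (n - 1 - (i : ℕ)) := by
  intro N
  induction N with
  | zero =>
    intro n I hI
    have hIe : I = ∅ := Finset.card_eq_zero.mp hI
    subst hIe
    have hw : tauWord (∅ : Finset (Fin n)) = Finset.univ.sort (· ≤ ·) := by
      simp [tauWord]
    have h1 : fperm (∅ : Finset (Fin n)) = 1 := by
      apply Equiv.ext
      intro p
      have hp : (p : ℕ) < (tauWord (∅ : Finset (Fin n))).length := by
        rw [length_tauWord]; exact p.isLt
      rw [fperm_apply _ _ hp]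
      have hp2 : (p : ℕ) < (Finset.univ.sort (· ≤ ·) : List (Fin n)).length := by
        rw [← hw]; exact hp
      simp only [Equiv.Perm.coe_one, id_eq]
      apply Fin.ext
      simp only [hw]
      exact getElem_sort_of_lt (Finset.univ : Finset (Fin n)) n
        (fun x _ => Finset.mem_univ x) (p : ℕ) p.isLt hp2
    rw [h1]
    simp
  | succ N ih =>
    intro n I hI
    obtain ⟨n0, rfl⟩ : ∃ n0, n = n0 + 1 := by
      cases n with
      | zero =>
        exfalso
        have hIe : I = ∅ := Finset.eq_empty_of_forall_notMem (fun x _ => x.elim0)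
        rw [hIe] at hI
        simp at hI
      | succ k => exact ⟨k, rfl⟩
    have hne : I.Nonempty := Finset.card_pos.mp (by omega)
    set m : Fin (n0 + 1) := I.min' hne with hmdef
    set M : ℕ := (m : ℕ) with hMdef
    set I' : Finset (Fin (n0 + 1)) := I.erase m with hI'def
    have hmI : m ∈ I := I.min'_mem hne
    have hmc : ∀ x : Fin (n0 + 1), (x : ℕ) < M → x ∈ Iᶜ := by
      intro x hx
      rw [Finset.mem_compl]
      intro hxI
      have := I.min'_le x hxI
      rw [Fin.le_def] at this
      omega
    have hmnotc : m ∉ Iᶜ := by rw [Finset.mem_compl]; simpa using hmI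
    set c : List (Fin (n0 + 1)) := Iᶜ.sort (· ≤ ·) with hcdef
    set s' : List (Fin (n0 + 1)) := I'.sort (· ≤ ·) with hs'def
    have hs : I.sort (· ≤ ·) = m :: s' := sort_eq_min_cons I hne
    have hcompl : I'ᶜ = insert m Iᶜ := Finset.compl_erase
    have hc' : I'ᶜ.sort (· ≤ ·) = c.take M ++ m :: c.drop M := by
      rw [hcompl]
      exact sort_insert_split Iᶜ m hmnotc hmc
    have hMk : M ≤ c.length := by
      rw [hcdef, Finset.length_sort]
      exact le_card_of_lt_mem Iᶜ m hmc
    have hklen : c.length + (s'.length + 1) = n0 + 1 := by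
      have h1 : c.length = Iᶜ.card := Finset.length_sort _
      have h2 : I.card = s'.length + 1 := by
        have h3 := congrArg List.length hs
        simpa using h3
      have h3 := Finset.card_compl_add_card I
      rw [Fintype.card_fin] at h3
      omega
    set k : ℕ := c.length with hkdef
    set L : ℕ := s'.length with hLdef
    -- the cycle
    set h : Equiv.Perm (Fin (n0 + 1)) :=
      Fin.revPerm * Fin.cycleRange (Fin.rev m) * Fin.revPerm with hhdef
    have hMlt : M < (n0 + 1) := m.isLt
    have hword : tauWord I = c ++ (s'.reverse ++ [m]) := by
      simp only [tauWord, hs, List.reverse_cons, hcdef]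
    have hword' : tauWord I' = (c.take M ++ m :: c.drop M) ++ s'.reverse := by
      simp only [tauWord, hc', ← hs'def]
    have hlenI := length_tauWord I
    have hlenI' := length_tauWord I'
    have key : fperm I * h = fperm I' := by
      apply Equiv.ext
      intro p
      have hp : (p : ℕ) < (tauWord I').length := by rw [hlenI']; exact p.isLt
      have hrhs : (fperm I') p = (tauWord I')[(p : ℕ)] := rfl
      set P : ℕ := (p : ℕ) with hPdef
      have hPn : P < n0 + 1 := p.isLt
      -- compute h p
      rcases lt_trichotomy P M with hPM | hPM | hPM
      · -- case A : P < M
        have hhp : h p = p := by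
          have h1 : Fin.rev m < Fin.rev p := Fin.rev_lt_rev.mpr (Fin.lt_def.mpr hPM)
          simp only [hhdef, Equiv.Perm.mul_apply, Fin.revPerm_apply]
          simp only [Fin.cycleRange_of_gt h1, Fin.rev_rev]
        rw [Equiv.Perm.mul_apply, hhp]
        have hpI : (p : ℕ) < (tauWord I).length := by rw [hlenI]; exact p.isLt
        rw [fperm_apply _ _ hpI, hrhs]
        have hPk : P < k := lt_of_lt_of_le hPM hMk
        simp only [hword, hword']
        rw [List.getElem_append_left hPk]
        have htl : P < (c.take M ++ m :: c.drop M).length := by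
          simp only [List.length_append, List.length_take, List.length_cons,
            List.length_drop]
          omega
        rw [List.getElem_append_left htl]
        have htk : P < (c.take M).length := by
          rw [List.length_take]; omega
        rw [List.getElem_append_left htk, List.getElem_take]
      · -- case B : P = M
        have hpm : p = m := Fin.ext hPM
        have hhp : h p = Fin.last n0 := by
          simp only [hhdef, Equiv.Perm.mul_apply, Fin.revPerm_apply, hpm]
          simp only [Fin.cycleRange_self, Fin.rev_zero]
        rw [Equiv.Perm.mul_apply, hhp]
        have hlastlt : (n0 : ℕ) < (tauWord I).length := by rw [hlenI]; omega
        have h1 : (fperm I) (Fin.last n0) = (tauWord I)[(n0 : ℕ)] := rfl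
        rw [h1, hrhs]
        simp only [hword, hword']
        have hn0k : k ≤ n0 := by omega
        rw [List.getElem_append_right hn0k]
        have hidx : n0 - k = L := by omega
        have hrevlen : n0 - k < (s'.reverse ++ [m]).length := by
          simp only [List.length_append, List.length_reverse, List.length_cons,
            List.length_nil]
          omega
        have h2 : (s'.reverse ++ [m])[n0 - k] = m := by
          have hge : s'.reverse.length ≤ n0 - k := by
            rw [List.length_reverse]; omega
          rw [List.getElem_append_right hge]
          simp [List.length_reverse, hidx]
        rw [h2]
        -- RHS
        have hMlt' : P < (c.take M ++ m :: c.drop M).length := by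
          simp only [List.length_append, List.length_take, List.length_cons,
            List.length_drop]
          omega
        rw [List.getElem_append_left hMlt']
        have hgeM : (c.take M).length ≤ P := by
          rw [List.length_take]; omega
        rw [List.getElem_append_right hgeM]
        have h0 : P - (List.take M c).length = 0 := by
          rw [List.length_take]; omega
        simp only [h0, List.getElem_cons_zero]
      · -- case C : M < P
        have hP1 : 1 ≤ P := by omega
        have hhp : ((h p : Fin (n0 + 1)) : ℕ) = P - 1 := by
          have h1 : Fin.rev p < Fin.rev m := Fin.rev_lt_rev.mpr (Fin.lt_def.mpr hPM)
          simp only [hhdef, Equiv.Perm.mul_apply, Fin.revPerm_apply]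
          simp only [Fin.cycleRange_of_lt h1]
          have hrevp : ((Fin.rev p : Fin (n0 + 1)) : ℕ) = (n0 + 1) - (P + 1) := Fin.val_rev p
          have hlt : Fin.rev p < Fin.last n0 := by
            rw [Fin.lt_def, hrevp, Fin.val_last]
            omega
          have hadd : ((Fin.rev p + 1 : Fin (n0 + 1)) : ℕ) = (n0 + 1) - (P + 1) + 1 := by
            rw [Fin.val_add_one_of_lt hlt, hrevp]
          rw [Fin.val_rev, hadd]
          omega
        rw [Equiv.Perm.mul_apply]
        have hplt : ((h p : Fin (n0 + 1)) : ℕ) < (tauWord I).length := by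
          rw [hlenI]; omega
        have h1 : (fperm I) (h p) = (tauWord I)[((h p : Fin (n0 + 1)) : ℕ)] := rfl
        rw [h1, hrhs]
        simp only [hword, hword']
        rcases le_or_gt P k with hPk | hPk
        · -- C1 : P ≤ k, so P - 1 < k
          have hc1 : ((h p : Fin (n0 + 1)) : ℕ) < c.length := by omega
          rw [List.getElem_append_left hc1]
          have hc2 : P < (c.take M ++ m :: c.drop M).length := by
            simp only [List.length_append, List.length_take, List.length_cons,
              List.length_drop]
            omega
          rw [List.getElem_append_left hc2]
          have hge : (c.take M).length ≤ P := by rw [List.length_take]; omega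
          rw [List.getElem_append_right hge]
          have hidx : P - (c.take M).length = (P - M - 1) + 1 := by
            rw [List.length_take]; omega
          simp only [hidx, List.getElem_cons_succ, List.getElem_drop]
          congr 1
          omega
        · -- C2 : P > k
          have hge1 : c.length ≤ ((h p : Fin (n0 + 1)) : ℕ) := by omega
          rw [List.getElem_append_right hge1]
          have hrev1 : ((h p : Fin (n0 + 1)) : ℕ) - c.length < (s'.reverse ++ [m]).length := by
            simp only [List.length_append, List.length_reverse, List.length_cons,
              List.length_nil]
            omega
          have hlt1 : ((h p : Fin (n0 + 1)) : ℕ) - c.length < s'.reverse.length := by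
            rw [List.length_reverse]; omega
          rw [List.getElem_append_left hlt1]
          rw [List.getElem_reverse]
          -- RHS
          have hge2 : (c.take M ++ m :: c.drop M).length ≤ P := by
            simp only [List.length_append, List.length_take, List.length_cons,
              List.length_drop]
            omega
          rw [List.getElem_append_right hge2]
          rw [List.getElem_reverse]
          congr 1
          simp only [List.length_append, List.length_take, List.length_cons,
            List.length_drop, List.length_reverse]
          omega
    -- now the sign computation
    have hsign := congrArg Equiv.Perm.sign key
    rw [map_mul] at hsign
    have hsh : Equiv.Perm.sign h = (-1 : ℤˣ) ^ (n0 - M) := by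
      rw [hhdef, map_mul, map_mul, Fin.sign_cycleRange]
      have hrevm : ((Fin.rev m : Fin (n0 + 1)) : ℕ) = n0 - M := by
        rw [Fin.val_rev]; omega
      rw [hrevm]
      have hcomm : Equiv.Perm.sign (Fin.revPerm : Equiv.Perm (Fin (n0 + 1))) * (-1 : ℤˣ) ^ (n0 - M) *
          Equiv.Perm.sign (Fin.revPerm : Equiv.Perm (Fin (n0 + 1))) =
          (Equiv.Perm.sign (Fin.revPerm : Equiv.Perm (Fin (n0 + 1))) *
            Equiv.Perm.sign (Fin.revPerm : Equiv.Perm (Fin (n0 + 1)))) * (-1 : ℤˣ) ^ (n0 - M) := by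
        rw [mul_assoc, mul_comm ((-1 : ℤˣ) ^ (n0 - M)) _, ← mul_assoc]
      rw [hcomm, Int.units_mul_self, one_mul]
    have hcard' : I'.card = N := by
      rw [hI'def, Finset.card_erase_of_mem hmI, hI]
      omega
    have hih := ih (n0 + 1) I' hcard'
    simp only [Nat.add_sub_cancel] at hih
    have hs1 : Equiv.Perm.sign (fperm I) * (-1 : ℤˣ) ^ (n0 - M) =
        ∏ i ∈ I', (-1 : ℤˣ) ^ (n0 - (i : ℕ)) := by
      rw [← hih, ← hsign, hsh]
    have hs2 : Equiv.Perm.sign (fperm I) =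
        (-1 : ℤˣ) ^ (n0 - M) * ∏ i ∈ I', (-1 : ℤˣ) ^ (n0 - (i : ℕ)) := by
      rw [← hs1]
      have : ((-1 : ℤˣ) ^ (n0 - M)) * ((-1 : ℤˣ) ^ (n0 - M)) = 1 :=
        Int.units_mul_self _
      calc Equiv.Perm.sign (fperm I)
          = Equiv.Perm.sign (fperm I) * (((-1 : ℤˣ) ^ (n0 - M)) * ((-1 : ℤˣ) ^ (n0 - M))) := by
            rw [this, mul_one]
        _ = (-1 : ℤˣ) ^ (n0 - M) * (Equiv.Perm.sign (fperm I) * (-1 : ℤˣ) ^ (n0 - M)) := by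
            rw [← mul_assoc]
            exact mul_comm _ _
    rw [hs2]
    simp only [Nat.add_sub_cancel]
    exact Finset.mul_prod_erase I (fun i => (-1 : ℤˣ) ^ (n0 - (i : ℕ))) hmI

end TauAux

theorem stmt_9 (n : ℕ) (I : Finset (Fin n)) (τ : Equiv.Perm (Fin n))
    (hτ : ∀ (p : Fin n) (hp : (p : ℕ) < (tauWord I).length),
      τ p = (tauWord I).get ⟨(p : ℕ), hp⟩) :
    Equiv.Perm.sign τ = ∏ i ∈ I, (-1 : ℤˣ) ^ (n - 1 - (i : ℕ)) := by
  have hτf : τ = TauAux.fperm I := by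
    apply Equiv.ext
    intro p
    have hp : (p : ℕ) < (tauWord I).length := by
      rw [TauAux.length_tauWord]; exact p.isLt
    rw [hτ p hp]
    rfl
  rw [hτf]
  exact TauAux.sign_fperm I.card n I rfl
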